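/- Let T be the rooted 7-ary tree (the simple graph on List (Fin 7) in which two words are adjacent iff one is obtained from the other by prepending a single letter). For every p with 1/7 < p < 1, μ_p-almost surely the set of infinite connected components of the open subgraph of T is infinite. -/

import Mathlib

open MeasureTheory
open scoped ENNReal

/-- The Bernoulli measure on `Bool` with parameter `p ≤ 1`:
it assigns mass `p` to `true` and `1 - p` to `false`. -/
noncomputable abbrev bernoulliMeasure (p : ℝ≥0∞) (hp : p ≤ 1) : Measure Bool :=
  (PMF.bernoulli p.toNNReal (by simpa using ENNReal.toNNReal_mono ENNReal.one_ne_top hp)).toMeasure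

/-- The family of finite-dimensional distributions of the i.i.d. Bernoulli(`p`) field
indexed by `ι`: to each finite set `J ⊆ ι` it assigns the finite product of
Bernoulli(`p`) measures.  A measure `μ` on `ι → Bool` is the infinite product of
Bernoulli(`p`) measures (the Bernoulli(`p`) site-percolation measure `μ_p`) exactly
when it is the projective limit of this family. -/
noncomputable def bernoulliPiFamily (ι : Type*) (p : ℝ≥0∞) (hp : p ≤ 1) :
    ∀ J : Finset ι, Measure (∀ _ : J, Bool) :=
  fun _J => Measure.pi fun _ => bernoulliMeasure p hp

/-- The rooted 7-ary tree: vertices are finite words over a 7-letter alphabet,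
two words being adjacent iff one is obtained from the other by prepending a letter. -/
def treeGraph : SimpleGraph (List (Fin 7)) :=
  SimpleGraph.fromRel fun x y => ∃ a : Fin 7, x = a :: y

namespace Stmt10Aux

abbrev V := List (Fin 7)
abbrev Cfg := V → Bool

/-- `E` depends only on coordinates in `J`. -/
def Dep (J : Finset V) (E : Set Cfg) : Prop :=
  ∀ ω ω' : Cfg, (∀ v ∈ J, ω v = ω' v) → ω ∈ E → ω' ∈ E

lemma Dep.mono {J K : Finset V} {E : Set Cfg} (hJK : J ⊆ K) (h : Dep J E) : Dep K E :=
  fun ω ω' hag => h ω ω' (fun v hv => hag v (hJK hv))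

lemma Dep.compl {J : Finset V} {E : Set Cfg} (h : Dep J E) : Dep J Eᶜ := by
  intro ω ω' hag hω hmem
  exact hω (h ω' ω (fun v hv => (hag v hv).symm) hmem)

lemma Dep.inter {J : Finset V} {E G : Set Cfg} (hE : Dep J E) (hG : Dep J G) :
    Dep J (E ∩ G) := fun ω ω' hag hω => ⟨hE ω ω' hag hω.1, hG ω ω' hag hω.2⟩

lemma Dep.iUnion {κ : Type*} {J : Finset V} {E : κ → Set Cfg} (h : ∀ a, Dep J (E a)) :
    Dep J (⋃ a, E a) := by
  intro ω ω' hag hω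
  obtain ⟨a, ha⟩ := Set.mem_iUnion.1 hω
  exact Set.mem_iUnion.2 ⟨a, h a ω ω' hag ha⟩

lemma Dep.biInter {κ : Type*} {F : Finset κ} {J : Finset V} {E : κ → Set Cfg}
    (h : ∀ a ∈ F, Dep J (E a)) : Dep J (⋂ a ∈ F, E a) := by
  intro ω ω' hag hω
  simp only [Set.mem_iInter] at hω ⊢
  exact fun a ha => h a ha ω ω' hag (hω a ha)

/-- the canonical fiber set of a cylinder event. -/
def fib (J : Finset V) (E : Set Cfg) : Set ((j : J) → Bool) :=
  {x | (fun v => if hv : v ∈ J then x ⟨v, hv⟩ else false) ∈ E}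

lemma dep_eq {J : Finset V} {E : Set Cfg} (h : Dep J E) :
    E = J.restrict ⁻¹' fib J E := by
  ext ω
  simp only [Set.mem_preimage, fib, Set.mem_setOf_eq]
  constructor
  · intro hω
    exact h ω _ (fun v hv => by simp [Finset.restrict, hv]) hω
  · intro hω
    exact h _ ω (fun v hv => by simp [Finset.restrict, hv]) hω

lemma measSet {J : Finset V} (S : Set ((j : J) → Bool)) : MeasurableSet S := by
  have hsing : ∀ x : (j : J) → Bool, MeasurableSet ({x} : Set ((j : J) → Bool)) := by
    intro x
    have : ({x} : Set ((j : J) → Bool)) = ⋂ v : J, (fun y : (j : J) → Bool => y v) ⁻¹' {x v} := by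
      ext y; simp [funext_iff]
    rw [this]
    exact MeasurableSet.iInter fun v => (measurable_pi_apply v) (measurableSet_singleton _)
  rw [← Set.biUnion_of_singleton S]
  exact (Set.toFinite S).measurableSet_biUnion fun x _ => hsing x

lemma Dep.measurableSet {J : Finset V} {E : Set Cfg} (h : Dep J E) : MeasurableSet E := by
  rw [dep_eq h]
  exact J.measurable_restrict (measSet _)

section Meas

open ProbabilityTheory

variable {p : ℝ≥0∞} (hp : p ≤ 1) {μ : Measure Cfg}
  (hμ : IsProjectiveLimit μ (bernoulliPiFamily V p hp))

lemma bern_true : bernoulliMeasure p hp {true} = p := by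
  rw [PMF.toMeasure_apply_singleton _ _ (measurableSet_singleton _)]
  exact (PMF.bernoulli_apply _ true).trans (by simp [ENNReal.coe_toNNReal (ne_top_of_le_ne_top ENNReal.one_ne_top hp)])

lemma bern_false : bernoulliMeasure p hp {false} = 1 - p := by
  rw [PMF.toMeasure_apply_singleton _ _ (measurableSet_singleton _)]
  exact (PMF.bernoulli_apply _ false).trans (by simp [ENNReal.coe_toNNReal (ne_top_of_le_ne_top ENNReal.one_ne_top hp)])

include hμ

lemma meas_cyl (J : Finset V) (S : Set ((j : J) → Bool)) :
    μ (J.restrict ⁻¹' S) = Measure.pi (fun _ : J => bernoulliMeasure p hp) S := by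
  have h2 : bernoulliPiFamily V p hp J = Measure.pi (fun _ : J => bernoulliMeasure p hp) := rfl
  rw [← h2, ← hμ J]
  exact (Measure.map_apply (J.measurable_restrict) (measSet S)).symm

lemma isProb : IsProbabilityMeasure μ := by
  constructor
  have h := meas_cyl hp hμ ∅ Set.univ
  simpa using h

lemma meas_coord (v : V) (s : Set Bool) :
    μ ((fun ω : Cfg => ω v) ⁻¹' s) = bernoulliMeasure p hp s := by
  have h1 : ((fun ω : Cfg => ω v) ⁻¹' s)
      = ({v} : Finset V).restrict ⁻¹' (Set.univ.pi fun _ => s) := by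
    ext ω
    simp [Finset.restrict, Set.mem_pi]
  rw [h1, meas_cyl hp hμ, Measure.pi_pi]
  simp

lemma meas_coord_true (v : V) : μ {ω : Cfg | ω v = true} = p := by
  have : {ω : Cfg | ω v = true} = (fun ω : Cfg => ω v) ⁻¹' {true} := rfl
  rw [this, meas_coord hp hμ, bern_true]

lemma meas_coord_false (v : V) : μ {ω : Cfg | ω v = false} = 1 - p := by
  have : {ω : Cfg | ω v = false} = (fun ω : Cfg => ω v) ⁻¹' {false} := rfl
  rw [this, meas_coord hp hμ, bern_false]

lemma indep_coords :
    iIndepFun (fun v (ω : Cfg) => ω v) μ := by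
  rw [iIndepFun_iff_measure_inter_preimage_eq_mul]
  intro S sets _
  have h1 : (⋂ v ∈ S, (fun ω : Cfg => ω v) ⁻¹' sets v)
      = S.restrict ⁻¹' (Set.univ.pi fun v : S => sets v) := by
    ext ω
    simp [Finset.restrict, Set.mem_pi]
  rw [h1, meas_cyl hp hμ, Measure.pi_pi]
  rw [← Finset.prod_coe_sort S]
  exact Finset.prod_congr rfl fun v _ => (meas_coord hp hμ v (sets v)).symm

lemma twoBlock {J K : Finset V} (hd : Disjoint J K) {E G : Set Cfg}
    (hE : Dep J E) (hG : Dep K G) : μ (E ∩ G) = μ E * μ G := by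
  have h := (indep_coords hp hμ).indepFun_finset J K hd (fun v => measurable_pi_apply v)
  rw [indepFun_iff_measure_inter_preimage_eq_mul] at h
  rw [dep_eq hE, dep_eq hG]
  exact h _ _ (measSet _) (measSet _)

lemma blockProd {κ : Type*} [DecidableEq κ] (F : Finset κ) (J : κ → Finset V) (E : κ → Set Cfg)
    (hd : ∀ i ∈ F, ∀ j ∈ F, i ≠ j → Disjoint (J i) (J j))
    (hE : ∀ i ∈ F, Dep (J i) (E i)) :
    μ (⋂ i ∈ F, E i) = ∏ i ∈ F, μ (E i) := by
  classical
  induction F using Finset.induction with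
  | empty =>
    have := isProb hp hμ
    simp
  | @insert i F hi ih =>
    rw [Finset.set_biInter_insert, Finset.prod_insert hi]
    have hrest : Dep (F.biUnion J) (⋂ x ∈ F, E x) := by
      refine Dep.biInter fun a ha => (hE a (Finset.mem_insert_of_mem ha)).mono ?_
      intro v hv
      exact Finset.mem_biUnion.2 ⟨a, ha, hv⟩
    have hdisj : Disjoint (J i) (F.biUnion J) := by
      rw [Finset.disjoint_biUnion_right]
      intro a ha
      exact hd i (Finset.mem_insert_self i F) a (Finset.mem_insert_of_mem ha)
        (fun h => hi (h ▸ ha))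
    rw [twoBlock hp hμ hdisj (hE i (Finset.mem_insert_self i F)) hrest]
    rw [ih (fun a ha b hb hab => hd a (Finset.mem_insert_of_mem ha) b (Finset.mem_insert_of_mem hb) hab)
      (fun a ha => hE a (Finset.mem_insert_of_mem ha))]

end Meas

/-! ### Reach events -/

def Reach (ω : Cfg) : V → ℕ → Prop
  | u, 0 => ω u = true
  | u, m + 1 => ω u = true ∧ ∃ a : Fin 7, Reach ω (a :: u) m

lemma Reach.open_root {ω : Cfg} {u : V} {m : ℕ} (h : Reach ω u m) : ω u = true := by
  cases m with
  | zero => exact h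
  | succ m => exact h.1

lemma Reach.anti {ω : Cfg} {m : ℕ} : ∀ {u : V}, Reach ω u (m + 1) → Reach ω u m := by
  induction m with
  | zero => exact fun h => h.1
  | succ m ih =>
    rintro u ⟨h1, a, h2⟩
    exact ⟨h1, a, ih h2⟩

def blockOf (u : V) : ℕ → Finset V
  | 0 => {u}
  | m + 1 => {u} ∪ Finset.univ.biUnion (fun a : Fin 7 => blockOf (a :: u) m)

lemma mem_blockOf {m : ℕ} : ∀ {u v : V}, v ∈ blockOf u m → ∃ t : V, v = t ++ u := by
  induction m with
  | zero =>
    intro u v hv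
    simp only [blockOf, Finset.mem_singleton] at hv
    exact ⟨[], by simp [hv]⟩
  | succ m ih =>
    intro u v hv
    simp only [blockOf, Finset.mem_union, Finset.mem_singleton, Finset.mem_biUnion] at hv
    rcases hv with hv | ⟨a, _, hv⟩
    · exact ⟨[], by simp [hv]⟩
    · obtain ⟨t, rfl⟩ := ih hv
      exact ⟨t ++ [a], by simp⟩

lemma self_mem_blockOf {u : V} {m : ℕ} : u ∈ blockOf u m := by
  cases m with
  | zero => simp [blockOf]
  | succ m => simp [blockOf]

lemma dep_reach {m : ℕ} : ∀ {u : V}, Dep (blockOf u m) {ω | Reach ω u m} := by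
  induction m with
  | zero =>
    intro u ω ω' hag hω
    have := hag u self_mem_blockOf
    simpa only [Reach, Set.mem_setOf_eq, ← this] using hω
  | succ m ih =>
    rintro u ω ω' hag ⟨h1, a, h2⟩
    refine ⟨(hag u self_mem_blockOf) ▸ h1, a, ?_⟩
    refine ih ω ω' (fun v hv => hag v ?_) h2
    simp only [blockOf, Finset.mem_union, Finset.mem_biUnion]
    exact Or.inr ⟨a, Finset.mem_univ a, hv⟩

lemma length_of_mem_blockOf {m : ℕ} {u v : V} (h : v ∈ blockOf u m) :
    u.length ≤ v.length := by
  obtain ⟨t, rfl⟩ := mem_blockOf h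
  simp

/-- the survival-probability recursion. -/
noncomputable def q (p : ℝ≥0∞) : ℕ → ℝ≥0∞
  | 0 => p
  | m + 1 => p * (1 - (1 - q p m) ^ 7)

section MeasReach

open ProbabilityTheory

variable {p : ℝ≥0∞} (hp : p ≤ 1) {μ : Measure Cfg}
  (hμ : IsProjectiveLimit μ (bernoulliPiFamily V p hp))

include hμ

lemma meas_reach : ∀ (m : ℕ) (u : V), μ {ω | Reach ω u m} = q p m := by
  intro m
  induction m with
  | zero => intro u; exact meas_coord_true hp hμ u
  | succ m ih =>
    intro u
    have hsplit : {ω : Cfg | Reach ω u (m + 1)}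
        = {ω : Cfg | ω u = true} ∩ ⋃ a : Fin 7, {ω | Reach ω (a :: u) m} := by
      ext ω
      simp only [Set.mem_inter_iff, Set.mem_iUnion, Set.mem_setOf_eq]
      exact ⟨fun ⟨h1, a, h2⟩ => ⟨h1, a, h2⟩, fun ⟨h1, a, h2⟩ => ⟨h1, a, h2⟩⟩
    have hdepU : Dep (Finset.univ.biUnion fun a : Fin 7 => blockOf (a :: u) m)
        (⋃ a : Fin 7, {ω | Reach ω (a :: u) m}) := by
      refine Dep.iUnion fun a => dep_reach.mono ?_
      intro v hv
      exact Finset.mem_biUnion.2 ⟨a, Finset.mem_univ a, hv⟩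
    have hdisj : Disjoint ({u} : Finset V) (Finset.univ.biUnion fun a : Fin 7 => blockOf (a :: u) m) := by
      rw [Finset.disjoint_left]
      intro v hv hv'
      rw [Finset.mem_singleton] at hv
      subst hv
      obtain ⟨a, _, hmem⟩ := Finset.mem_biUnion.1 hv'
      have := length_of_mem_blockOf hmem
      simp at this
    have hdep1 : Dep ({u} : Finset V) {ω : Cfg | ω u = true} := by
      intro ω ω' hag hω
      have := hag u (Finset.mem_singleton_self u)
      simpa only [Set.mem_setOf_eq, ← this] using hω
    rw [hsplit, twoBlock hp hμ hdisj hdep1 hdepU, meas_coord_true hp hμ]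
    -- now compute the union via complements
    have := isProb hp hμ (μ := μ)
    have hcompl : (⋃ a : Fin 7, {ω : Cfg | Reach ω (a :: u) m})ᶜ
        = ⋂ a ∈ (Finset.univ : Finset (Fin 7)), {ω : Cfg | Reach ω (a :: u) m}ᶜ := by
      simp [Set.compl_iUnion]
    have hdisj2 : ∀ a ∈ (Finset.univ : Finset (Fin 7)), ∀ b ∈ (Finset.univ : Finset (Fin 7)),
        a ≠ b → Disjoint (blockOf (a :: u) m) (blockOf (b :: u) m) := by
      intro a _ b _ hab
      rw [Finset.disjoint_left]
      intro v hva hvb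
      obtain ⟨t, rfl⟩ := mem_blockOf hva
      obtain ⟨s, hs⟩ := mem_blockOf hvb
      have hsuf : (a :: u) <:+ s ++ (b :: u) := hs ▸ ⟨t, rfl⟩
      have hsuf2 : (b :: u) <:+ s ++ (b :: u) := ⟨s, rfl⟩
      have := List.suffix_or_suffix_of_suffix hsuf hsuf2
      have heq : a :: u = b :: u := by
        rcases this with h | h
        · exact h.eq_of_length (by simp)
        · exact (h.eq_of_length (by simp)).symm
      exact hab (by injection heq)
    have hprod := blockProd hp hμ (Finset.univ : Finset (Fin 7))
      (fun a => blockOf (a :: u) m) (fun a => {ω : Cfg | Reach ω (a :: u) m}ᶜ) hdisj2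
      (fun a _ => dep_reach.compl)
    have hmeasU : MeasurableSet (⋃ a : Fin 7, {ω : Cfg | Reach ω (a :: u) m}) :=
      MeasurableSet.iUnion fun a => (dep_reach (u := a :: u)).measurableSet
    have hUc : μ ((⋃ a : Fin 7, {ω : Cfg | Reach ω (a :: u) m})ᶜ) = (1 - q p m) ^ 7 := by
      rw [hcompl, hprod]
      have : ∀ a : Fin 7, μ ({ω : Cfg | Reach ω (a :: u) m}ᶜ) = 1 - q p m := by
        intro a
        rw [measure_compl (dep_reach (u := a :: u)).measurableSet (measure_ne_top μ _),
          measure_univ, ih (a :: u)]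
      rw [Finset.prod_congr rfl fun a _ => this a]
      simp
    have hU : μ (⋃ a : Fin 7, {ω : Cfg | Reach ω (a :: u) m}) = 1 - (1 - q p m) ^ 7 := by
      have h1 := measure_compl hmeasU (measure_ne_top μ _)
      rw [measure_univ, hUc] at h1
      have h2 : μ (⋃ a : Fin 7, {ω : Cfg | Reach ω (a :: u) m}) ≤ 1 := prob_le_one
      have h3 : (1 : ℝ≥0∞) - (1 - μ (⋃ a : Fin 7, {ω : Cfg | Reach ω (a :: u) m})) =
          μ (⋃ a : Fin 7, {ω : Cfg | Reach ω (a :: u) m}) :=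
        ENNReal.sub_sub_cancel ENNReal.one_ne_top h2
      rw [← h3, h1]
    rw [hU]
    rfl

end MeasReach

/-! ### Scalar analysis -/

section Scalar

variable {x : ℝ} (h1 : 1 / 7 < x) (h2 : x < 1)

include h1 h2

lemma creal_key :
    0 < (7 * x - 1) / 42 ∧ (7 * x - 1) / 42 ≤ x ∧ (7 * x - 1) / 42 ≤ 1 ∧
      (7 * x - 1) / 42 ≤ x * (1 - (1 - (7 * x - 1) / 42) ^ 7) := by
  set c : ℝ := (7 * x - 1) / 42 with hc
  have hc0 : 0 < c := by rw [hc]; linarith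
  have hc17 : c ≤ 1 / 7 := by rw [hc]; linarith
  have hc1 : c ≤ 1 := by linarith
  have hcx : c ≤ x := by rw [hc]; linarith
  refine ⟨hc0, hcx, hc1, ?_⟩
  have e : 1 - 7 * c + 21 * c ^ 2 - (1 - c) ^ 7
      = c ^ 3 * (35 - 35 * c + 21 * c ^ 2 - 7 * c ^ 3 + c ^ 4) := by ring
  have hinner : 0 ≤ 35 - 35 * c + 21 * c ^ 2 - 7 * c ^ 3 + c ^ 4 := by nlinarith [sq_nonneg c, pow_nonneg hc0.le 3, pow_nonneg hc0.le 4]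
  have hb : (1 - c) ^ 7 ≤ 1 - 7 * c + 21 * c ^ 2 := by nlinarith [mul_nonneg (pow_nonneg hc0.le 3) hinner]
  have hx0 : (0 : ℝ) ≤ x := by linarith
  have h3 : 7 * c - 21 * c ^ 2 ≤ 1 - (1 - c) ^ 7 := by linarith
  have h4 : x * (7 * c - 21 * c ^ 2) ≤ x * (1 - (1 - c) ^ 7) := by
    apply mul_le_mul_of_nonneg_left h3 hx0
  have h5 : c ≤ x * (7 * c - 21 * c ^ 2) := by nlinarith [hc0.le, hc17]
  linarith

end Scalar

section QBound

variable {p : ℝ≥0∞} (hp₁ : 1 / 7 < p) (hp₂ : p < 1)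

/-- a positive lower bound on the survival probabilities. -/
noncomputable def cc (p : ℝ≥0∞) : ℝ≥0∞ := ENNReal.ofReal ((7 * p.toReal - 1) / 42)

include hp₁ hp₂

lemma x_facts : 1 / 7 < p.toReal ∧ p.toReal < 1 := by
  have hne : p ≠ ∞ := (hp₂.trans ENNReal.one_lt_top).ne
  constructor
  · have : ((1 : ℝ≥0∞) / 7).toReal < p.toReal :=
      ENNReal.toReal_strict_mono hne hp₁
    simpa using this
  · have : p.toReal < (1 : ℝ≥0∞).toReal :=
      ENNReal.toReal_strict_mono ENNReal.one_ne_top hp₂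
    simpa using this

lemma cc_ne_zero : cc p ≠ 0 := by
  obtain ⟨h1, h2⟩ := x_facts hp₁ hp₂
  have := (creal_key h1 h2).1
  exact (ENNReal.ofReal_pos.2 this).ne'

lemma cc_le_p : cc p ≤ p := by
  obtain ⟨h1, h2⟩ := x_facts hp₁ hp₂
  have hne : p ≠ ∞ := (hp₂.trans ENNReal.one_lt_top).ne
  have := (creal_key h1 h2).2.1
  calc cc p ≤ ENNReal.ofReal p.toReal := ENNReal.ofReal_le_ofReal this
  _ = p := ENNReal.ofReal_toReal hne

lemma cc_fix : cc p ≤ p * (1 - (1 - cc p) ^ 7) := by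
  obtain ⟨h1, h2⟩ := x_facts hp₁ hp₂
  have hne : p ≠ ∞ := (hp₂.trans ENNReal.one_lt_top).ne
  obtain ⟨hc0, hcx, hc1, hkey⟩ := creal_key h1 h2
  set c : ℝ := (7 * p.toReal - 1) / 42 with hcdef
  have e1 : (1 : ℝ≥0∞) - cc p = ENNReal.ofReal (1 - c) := by
    rw [ENNReal.ofReal_sub _ hc0.le, ENNReal.ofReal_one]; rfl
  have e2 : ((1 : ℝ≥0∞) - cc p) ^ 7 = ENNReal.ofReal ((1 - c) ^ 7) := by
    rw [e1, ← ENNReal.ofReal_pow (by linarith)]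
  have h1c7 : (1 - c) ^ 7 ≤ 1 := by
    have : (1 - c) ≤ 1 := by linarith
    calc (1 - c) ^ 7 ≤ 1 ^ 7 := pow_le_pow_left₀ (by linarith) this 7
    _ = 1 := one_pow 7
  have e3 : (1 : ℝ≥0∞) - ((1 : ℝ≥0∞) - cc p) ^ 7 = ENNReal.ofReal (1 - (1 - c) ^ 7) := by
    rw [e2, ENNReal.ofReal_sub _ (pow_nonneg (by linarith) 7), ENNReal.ofReal_one]
  have e4 : p * ((1 : ℝ≥0∞) - ((1 : ℝ≥0∞) - cc p) ^ 7)
      = ENNReal.ofReal (p.toReal * (1 - (1 - c) ^ 7)) := by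
    rw [e3, ENNReal.ofReal_mul (by linarith), ENNReal.ofReal_toReal hne]
  rw [e4]
  exact ENNReal.ofReal_le_ofReal hkey

lemma cc_le_q : ∀ m, cc p ≤ q p m := by
  intro m
  induction m with
  | zero => exact cc_le_p hp₁ hp₂
  | succ m ih =>
    have hmono : (1 - q p m) ^ 7 ≤ (1 - cc p) ^ 7 :=
      pow_le_pow_left₀ zero_le (tsub_le_tsub_left ih 1) 7
    have : 1 - (1 - cc p) ^ 7 ≤ 1 - (1 - q p m) ^ 7 := tsub_le_tsub_left hmono 1
    calc cc p ≤ p * (1 - (1 - cc p) ^ 7) := cc_fix hp₁ hp₂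
    _ ≤ p * (1 - (1 - q p m) ^ 7) := mul_le_mul_right this p
    _ = q p (m + 1) := rfl

end QBound

/-! ### The events -/

def rt (n : ℕ) : V := List.replicate n 0

def uu (n : ℕ) : V := 1 :: rt n

lemma count_rt (n : ℕ) : (rt n).count 1 = 0 := by
  simp [rt, List.count_replicate]

lemma append_uu_ne_rt (t : V) (n n' : ℕ) : t ++ uu n ≠ rt n' := by
  intro h
  have := congrArg (List.count 1) h
  rw [List.count_append, count_rt] at this
  simp [uu, List.count_cons, count_rt] at this

lemma suffix_uu_eq {n n' : ℕ} (h : uu n <:+ uu n') : n = n' := by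
  obtain ⟨s, hs⟩ := h
  cases s with
  | nil =>
    simp only [List.nil_append, uu] at hs
    have : rt n = rt n' := by injection hs
    have hlen := congrArg List.length this
    simpa [rt] using hlen
  | cons b s' =>
    rw [List.cons_append] at hs
    have hb : b = 1 := by injection hs
    have htail : s' ++ uu n = rt n' := by injection hs
    exact absurd htail (append_uu_ne_rt s' n n')

lemma append_uu_eq {t s : V} {n n' : ℕ} (h : t ++ uu n = s ++ uu n') : n = n' := by
  have h1 : uu n <:+ s ++ uu n' := h ▸ ⟨t, rfl⟩
  have h2 : uu n' <:+ s ++ uu n' := ⟨s, rfl⟩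
  rcases List.suffix_or_suffix_of_suffix h1 h2 with h3 | h3
  · exact suffix_uu_eq h3
  · exact (suffix_uu_eq h3).symm

/-- the combined coordinate blocks. -/
def Bk (n m : ℕ) : Finset V := {rt n} ∪ blockOf (uu n) m

lemma rt_not_mem_blockOf {n n' m : ℕ} : rt n' ∉ blockOf (uu n) m := by
  intro h
  obtain ⟨t, ht⟩ := mem_blockOf h
  exact append_uu_ne_rt t n n' ht.symm

lemma Bk_disjoint {n n' m : ℕ} (h : n ≠ n') : Disjoint (Bk n m) (Bk n' m) := by
  rw [Finset.disjoint_left]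
  intro v hv hv'
  simp only [Bk, Finset.mem_union, Finset.mem_singleton] at hv hv'
  rcases hv with rfl | hv
  · rcases hv' with hv' | hv'
    · apply h
      have := congrArg List.length hv'
      simpa [rt] using this
    · exact rt_not_mem_blockOf hv'
  · rcases hv' with rfl | hv'
    · exact rt_not_mem_blockOf hv
    · obtain ⟨t, rfl⟩ := mem_blockOf hv
      obtain ⟨s, hs⟩ := mem_blockOf hv'
      exact h (append_uu_eq hs)

def B (n m : ℕ) : Set Cfg := {ω | ω (rt n) = false} ∩ {ω | Reach ω (uu n) m}

def A (n : ℕ) : Set Cfg := ⋂ m, B n m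

lemma dep_closed (v : V) : Dep ({v} : Finset V) {ω : Cfg | ω v = false} := by
  intro ω ω' hag hω
  have := hag v (Finset.mem_singleton_self v)
  simpa only [Set.mem_setOf_eq, ← this] using hω

lemma dep_B (n m : ℕ) : Dep (Bk n m) (B n m) :=
  Dep.inter ((dep_closed (rt n)).mono Finset.subset_union_left)
    (dep_reach.mono Finset.subset_union_right)

lemma B_anti (n : ℕ) : Antitone fun m => B n m := by
  apply antitone_nat_of_succ_le
  intro m ω hω
  exact ⟨hω.1, hω.2.anti⟩

lemma A_measurable (n : ℕ) : MeasurableSet (A n) :=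
  MeasurableSet.iInter fun m => (dep_B n m).measurableSet

lemma tendsto_prod_iInf (F : Finset ℕ) (g : ℕ → ℕ → ℝ≥0∞) (hanti : ∀ n, Antitone (g n))
    (hle : ∀ n m, g n m ≤ 1) :
    Filter.Tendsto (fun m => ∏ n ∈ F, g n m) Filter.atTop (nhds (∏ n ∈ F, ⨅ m, g n m)) := by
  classical
  induction F using Finset.induction with
  | empty => simpa using tendsto_const_nhds
  | @insert i F hi ih =>
    simp only [Finset.prod_insert hi]
    have hne1 : (⨅ m, g i m) ≠ ∞ :=
      ne_top_of_le_ne_top ENNReal.one_ne_top ((iInf_le _ 0).trans (hle i 0))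
    have hne2 : (∏ n ∈ F, ⨅ m, g n m) ≠ ∞ := by
      refine ne_top_of_le_ne_top ENNReal.one_ne_top (Finset.prod_le_one ?_ ?_)
      · intro n _; exact zero_le
      · intro n _; exact (iInf_le _ 0).trans (hle n 0)
    exact ENNReal.Tendsto.mul (tendsto_atTop_iInf (hanti i)) (Or.inr hne2) ih (Or.inr hne1)

lemma iInf_prod_eq (F : Finset ℕ) (g : ℕ → ℕ → ℝ≥0∞) (hanti : ∀ n, Antitone (g n))
    (hle : ∀ n m, g n m ≤ 1) :
    ⨅ m, ∏ n ∈ F, g n m = ∏ n ∈ F, ⨅ m, g n m := by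
  have hpanti : Antitone fun m => ∏ n ∈ F, g n m := fun m m' hmm' =>
    Finset.prod_le_prod' fun n _ => hanti n hmm'
  exact tendsto_nhds_unique (tendsto_atTop_iInf hpanti) (tendsto_prod_iInf F g hanti hle)

section EventMeas

open ProbabilityTheory

variable {p : ℝ≥0∞} (hp₂ : p < 1) {μ : Measure Cfg}
  (hμ : IsProjectiveLimit μ (bernoulliPiFamily V p hp₂.le))

include hμ

lemma meas_B (n m : ℕ) : μ (B n m) = (1 - p) * q p m := by
  have hdisj : Disjoint ({rt n} : Finset V) (blockOf (uu n) m) := by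
    rw [Finset.disjoint_left]
    intro v hv hv'
    rw [Finset.mem_singleton] at hv
    subst hv
    exact rt_not_mem_blockOf hv'
  rw [B, twoBlock hp₂.le hμ hdisj (dep_closed (rt n)) dep_reach,
    meas_coord_false hp₂.le hμ, meas_reach hp₂.le hμ]

lemma meas_biInter_B (F : Finset ℕ) (m : ℕ) :
    μ (⋂ n ∈ F, B n m) = ∏ n ∈ F, μ (B n m) :=
  blockProd hp₂.le hμ F (fun n => Bk n m) (fun n => B n m)
    (fun i _ j _ hij => Bk_disjoint hij) (fun i _ => dep_B i m)

lemma meas_A : ∀ n, μ (A n) = ⨅ m, μ (B n m) := by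
  have := isProb hp₂.le hμ (μ := μ)
  intro n
  exact Antitone.measure_iInter (B_anti n)
    (fun m => ((dep_B n m).measurableSet).nullMeasurableSet)
    ⟨0, measure_ne_top μ _⟩

lemma meas_A_ge (hp₁ : 1 / 7 < p) (n : ℕ) : (1 - p) * cc p ≤ μ (A n) := by
  rw [meas_A hp₂ hμ n]
  refine le_iInf fun m => ?_
  rw [meas_B hp₂ hμ n m]
  exact mul_le_mul_right (cc_le_q hp₁ hp₂ m) _

lemma indepA : iIndepSet A μ := by
  have := isProb hp₂.le hμ (μ := μ)
  rw [iIndepSet_iff_meas_biInter A_measurable]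
  intro F
  have hswap : (⋂ n ∈ F, A n) = ⋂ m, ⋂ n ∈ F, B n m := by
    ext ω
    simp only [A, Set.mem_iInter]
    exact ⟨fun h m n hn => h n hn m, fun h n hn m => h m n hn⟩
  have hanti : Antitone fun m => ⋂ n ∈ F, B n m := fun m m' hmm' =>
    Set.iInter₂_mono fun n _ => B_anti n hmm'
  rw [hswap, Antitone.measure_iInter hanti
    (fun m => (MeasurableSet.biInter F.countable_toSet
      (fun n _ => (dep_B n m).measurableSet)).nullMeasurableSet)
    ⟨0, measure_ne_top μ _⟩]
  have e1 : ∀ m : ℕ, μ (⋂ n ∈ F, B n m) = ∏ n ∈ F, μ (B n m) := fun m =>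
    meas_biInter_B hp₂ hμ F m
  rw [iInf_congr e1, iInf_prod_eq F (fun n m => μ (B n m))
    (fun n m m' h => measure_mono (B_anti n h)) (fun n m => prob_le_one)]
  exact Finset.prod_congr rfl fun n _ => (meas_A hp₂ hμ n).symm

lemma meas_limsup_one (hp₁ : 1 / 7 < p) : μ (Filter.limsup A Filter.atTop) = 1 := by
  refine measure_limsup_eq_one A_measurable (indepA hp₂ hμ) ?_
  have hδ : (1 - p) * cc p ≠ 0 := by
    apply mul_ne_zero
    · intro h
      rw [tsub_eq_zero_iff_le] at h
      exact absurd h (not_le.2 hp₂)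
    · exact cc_ne_zero hp₁ hp₂
  refine top_le_iff.1 ?_
  calc (⊤ : ℝ≥0∞) = ∑' _ : ℕ, (1 - p) * cc p := (ENNReal.tsum_const_eq_top_of_ne_zero hδ).symm
  _ ≤ ∑' n, μ (A n) := ENNReal.tsum_le_tsum fun n => meas_A_ge hp₂ hμ hp₁ n

end EventMeas


section Graph

variable (ω : Cfg)

lemma tree_adj_cons (a : Fin 7) (u : V) : treeGraph.Adj (a :: u) u := by
  rw [treeGraph, SimpleGraph.fromRel_adj]
  exact ⟨by simp [← List.length_eq_zero_iff], Or.inl ⟨a, rfl⟩⟩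

lemma reach_component (u : V) (m : ℕ) (hu : Reach ω u m) :
    ∃ v : {v : V | ω v = true}, (v : V).length = u.length + m ∧
      (treeGraph.induce {v : V | ω v = true}).Reachable v ⟨u, hu.open_root⟩ := by
  induction m generalizing u with
  | zero => exact ⟨⟨u, hu.open_root⟩, by simp, SimpleGraph.Reachable.refl _⟩
  | succ m ih =>
    obtain ⟨h1, a, h2⟩ := hu
    obtain ⟨v, hvlen, hvr⟩ := ih (a :: u) h2
    have hadj : (treeGraph.induce {v : V | ω v = true}).Adj ⟨a :: u, h2.open_root⟩ ⟨u, h1⟩ := by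
      rw [SimpleGraph.comap_adj]
      exact tree_adj_cons a u
    refine ⟨v, ?_, hvr.trans hadj.reachable⟩
    rw [hvlen]
    simp [List.length_cons]
    omega

lemma step_suffix {n : ℕ} (hcl : ω (rt n) = false) {a b : {v : V | ω v = true}}
    (hadj : (treeGraph.induce {v : V | ω v = true}).Adj a b)
    (hsa : uu n <:+ (a : V)) : uu n <:+ (b : V) := by
  rw [SimpleGraph.comap_adj, treeGraph, SimpleGraph.fromRel_adj] at hadj
  obtain ⟨hne, h | h⟩ := hadj
  · obtain ⟨d, hd⟩ := h
    have hd' : (a : V) = d :: (b : V) := hd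
    rw [hd'] at hsa
    rcases List.suffix_cons_iff.1 hsa with h' | h'
    · exfalso
      have hbrt : rt n = (b : V) := by injection h'
      have := b.2
      rw [Set.mem_setOf_eq, ← hbrt, hcl] at this
      exact Bool.false_ne_true this
    · exact h'
  · obtain ⟨d, hd⟩ := h
    have hd' : (b : V) = d :: (a : V) := hd
    rw [hd']
    exact hsa.trans ((a : V).suffix_cons d)

lemma reachable_suffix {n : ℕ} (hcl : ω (rt n) = false) {x y : {v : V | ω v = true}}
    (hr : (treeGraph.induce {v : V | ω v = true}).Reachable x y)
    (hsx : uu n <:+ (x : V)) : uu n <:+ (y : V) := by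
  obtain ⟨w⟩ := hr
  induction w with
  | nil => exact hsx
  | cons hadj w ih => exact ih (step_suffix ω hcl hadj hsx)

lemma det (N : Set ℕ) (hN : N.Infinite) (hA : ∀ n ∈ N, ω ∈ A n) :
    {c : (treeGraph.induce {v : V | ω v = true}).ConnectedComponent |
      c.supp.Infinite}.Infinite := by
  have hB : ∀ n ∈ N, ∀ m, ω ∈ B n m := fun n hn m => Set.mem_iInter.1 (hA n hn) m
  have hopen : ∀ n ∈ N, ω (uu n) = true := fun n hn => (hB n hn 0).2
  have hcl : ∀ n ∈ N, ω (rt n) = false := fun n hn => (hB n hn 0).1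
  have hreach : ∀ n ∈ N, ∀ m, Reach ω (uu n) m := fun n hn m => (hB n hn m).2
  haveI := hN.to_subtype
  set G := treeGraph.induce {v : V | ω v = true} with hG
  refine Set.infinite_of_injective_forall_mem
    (f := fun n : N => G.connectedComponentMk ⟨uu n.1, hopen n.1 n.2⟩) ?_ ?_
  · intro n n' h
    have hr : G.Reachable ⟨uu n.1, hopen n.1 n.2⟩ ⟨uu n'.1, hopen n'.1 n'.2⟩ :=
      SimpleGraph.ConnectedComponent.eq.1 h
    have h1 : uu n'.1 <:+ uu n.1 :=
      reachable_suffix ω (hcl n'.1 n'.2) hr.symm (List.suffix_refl _)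
    have h2 : uu n.1 <:+ uu n'.1 :=
      reachable_suffix ω (hcl n.1 n.2) hr (List.suffix_refl _)
    have heq : uu n.1 = uu n'.1 := h2.eq_of_length (le_antisymm h2.length_le h1.length_le)
    have : rt n.1 = rt n'.1 := by injection heq
    have hlen := congrArg List.length this
    simp only [rt, List.length_replicate] at hlen
    exact Subtype.ext hlen
  · rintro ⟨n, hn⟩
    simp only [Set.mem_setOf_eq]
    have hex : ∀ m, ∃ v : {v : V | ω v = true}, (v : V).length = (uu n).length + m ∧
        G.Reachable v ⟨uu n, hopen n hn⟩ := fun m => reach_component ω (uu n) m (hreach n hn m)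
    refine Set.infinite_of_injective_forall_mem
      (f := fun m : ℕ => Classical.choose (hex m)) ?_ ?_
    · intro m m' h
      have s1 := (Classical.choose_spec (hex m)).1
      have s2 := (Classical.choose_spec (hex m')).1
      have h' : Classical.choose (hex m) = Classical.choose (hex m') := h
      rw [h'] at s1
      rw [s1] at s2
      omega
    · intro m
      rw [SimpleGraph.ConnectedComponent.mem_supp_iff]
      exact SimpleGraph.ConnectedComponent.sound (Classical.choose_spec (hex m)).2

end Graph

end Stmt10Aux

/-- **Non-uniqueness on the rooted 7-ary tree.**
For Bernoulli(`p`) site percolation `μ_p` on the rooted 7-ary tree `T`, for every `p`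
with `1/7 < p < 1`, almost surely the set of infinite connected components of the
open subgraph of `T` is infinite. -/
theorem stmt_10 (p : ℝ≥0∞) (hp₁ : 1 / 7 < p) (hp₂ : p < 1)
    (μ : Measure (List (Fin 7) → Bool))
    (hμ : IsProjectiveLimit μ (bernoulliPiFamily (List (Fin 7)) p hp₂.le)) :
    μ {ω | {c : (treeGraph.induce {v | ω v = true}).ConnectedComponent |
        c.supp.Infinite}.Infinite} = 1 := by
  have hprob : IsProbabilityMeasure μ := Stmt10Aux.isProb hp₂.le hμ
  have hone := Stmt10Aux.meas_limsup_one hp₂ hμ hp₁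
  have hsub : Filter.limsup Stmt10Aux.A Filter.atTop ⊆
      {ω | {c : (treeGraph.induce {v | ω v = true}).ConnectedComponent |
        c.supp.Infinite}.Infinite} := by
    intro ω hω
    have hfreq : ∃ᶠ n in Filter.atTop, ω ∈ Stmt10Aux.A n :=
      Filter.mem_limsup_iff_frequently_mem.1 hω
    have hinf : {n | ω ∈ Stmt10Aux.A n}.Infinite :=
      Nat.frequently_atTop_iff_infinite.1 hfreq
    exact Stmt10Aux.det ω _ hinf (fun n hn => hn)
  exact le_antisymm prob_le_one (hone ▸ measure_mono hsub)
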